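/- Let R be an odd squarefree positive integer, let S be a divisor of R with S > 1, and let d ≥ 2 be an integer. For each divisor k of R, set N_k = φ(k), and set N′_k = φ(k) if S ∣ k and N′_k = d·φ(k) if S ∤ k. Then ∑_{k ∣ R} μ(k)·(1/N_k − 1/N′_k) > 0. -/

import Mathlib

open ArithmeticFunction

/-- `k ↦ (φ k)⁻¹` as a ℚ-valued arithmetic function. -/
noncomputable def totientInv : ArithmeticFunction ℚ :=
  ⟨fun k => ((Nat.totient k : ℚ))⁻¹, by simp⟩

lemma totientInv_apply (k : ℕ) : totientInv k = ((Nat.totient k : ℚ))⁻¹ := rfl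

lemma totientInv_isMultiplicative : totientInv.IsMultiplicative := by
  constructor
  · simp [totientInv_apply]
  · intro m n h
    simp only [totientInv_apply, Nat.totient_mul h]
    push_cast
    rw [mul_inv]

lemma aux_sum {n : ℕ} (hn : Squarefree n) :
    ∑ k ∈ n.divisors, (moebius k : ℚ) * ((Nat.totient k : ℚ))⁻¹ =
      ∏ p ∈ n.primeFactors, (1 - ((Nat.totient p : ℚ))⁻¹) := by
  have := IsMultiplicative.prodPrimeFactors_one_sub_of_squarefree totientInv
    totientInv_isMultiplicative hn
  simp only [totientInv_apply] at this
  exact this.symm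

lemma one_le_prod_rat {s : Finset ℕ} {f : ℕ → ℚ} (h : ∀ i ∈ s, 1 ≤ f i) :
    1 ≤ ∏ i ∈ s, f i := by
  calc (1 : ℚ) = ∏ i ∈ s, 1 := by rw [Finset.prod_const_one]
  _ ≤ ∏ i ∈ s, f i := Finset.prod_le_prod (fun i _ => zero_le_one) h

lemma prime_five_le {p q : ℕ} (hp : p.Prime) (hq : q.Prime) (hp3 : 3 ≤ p) (hq3 : 3 ≤ q)
    (hne : p ≠ q) : 5 ≤ p ∨ 5 ≤ q := by
  by_contra h
  push_neg at h
  obtain ⟨h1, h2⟩ := h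
  have hp' : p = 3 ∨ p = 4 := by omega
  have hq' : q = 3 ∨ q = 4 := by omega
  have h4 : ¬ Nat.Prime 4 := by decide
  rcases hp' with rfl | rfl
  · rcases hq' with rfl | rfl
    · exact hne rfl
    · exact h4 hq
  · exact h4 hp

/-- For `R` odd squarefree, `S ∣ R` with `S > 1`, and `d ≥ 2`, setting
`N_k = φ(k)` and `N′_k = φ(k)` if `S ∣ k`, `N′_k = d·φ(k)` otherwise, the sum
`∑_{k ∣ R} μ(k)(1/N_k − 1/N′_k)` is strictly positive. -/
theorem stmt10 (R S d : ℕ) (hR0 : 0 < R) (hRodd : Odd R) (hRsq : Squarefree R)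
    (hSR : S ∣ R) (hS1 : 1 < S) (hd : 2 ≤ d) :
    0 < ∑ k ∈ R.divisors, (moebius k : ℚ) *
        (1 / (Nat.totient k : ℚ) -
          1 / (if S ∣ k then (Nat.totient k : ℚ) else (d : ℚ) * (Nat.totient k : ℚ))) := by
  classical
  set T := R / S with hT
  have hRT : S * T = R := Nat.mul_div_cancel' hSR
  have hRsq' : Squarefree (S * T) := by rwa [hRT]
  obtain ⟨hcop, hSsq, hTsq⟩ := Nat.squarefree_mul_iff.mp hRsq'
  have hS0 : S ≠ 0 := by omega
  have hT0 : T ≠ 0 := (Nat.div_pos (Nat.le_of_dvd hR0 hSR) (by omega)).ne'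
  -- all prime factors of R are odd
  have hodd : ∀ p ∈ R.primeFactors, 3 ≤ p := by
    intro p hp
    have hpp := Nat.prime_of_mem_primeFactors hp
    have hpd := Nat.dvd_of_mem_primeFactors hp
    rcases hpp.eq_two_or_odd' with h2 | hop
    · exfalso
      rw [h2] at hpd
      rw [← Nat.not_even_iff_odd, even_iff_two_dvd] at hRodd
      exact hRodd hpd
    · have h2 := hpp.two_le
      rw [Nat.odd_iff] at hop
      omega
  have hfac : R.primeFactors = S.primeFactors ∪ T.primeFactors := by
    rw [← hRT, Nat.primeFactors_mul hS0 hT0]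
  have hdisj : Disjoint S.primeFactors T.primeFactors :=
    Nat.Coprime.disjoint_primeFactors hcop
  have hoddS : ∀ p ∈ S.primeFactors, 3 ≤ p := fun p hp =>
    hodd p (hfac ▸ Finset.mem_union_left _ hp)
  have hoddT : ∀ p ∈ T.primeFactors, 3 ≤ p := fun p hp =>
    hodd p (hfac ▸ Finset.mem_union_right _ hp)
  -- step 1: rewrite each summand
  have hstep1 : ∀ k ∈ R.divisors,
      (moebius k : ℚ) * (1 / (Nat.totient k : ℚ) -
          1 / (if S ∣ k then (Nat.totient k : ℚ) else (d : ℚ) * (Nat.totient k : ℚ)))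
      = (1 - 1 / (d : ℚ)) *
          (if S ∣ k then 0 else (moebius k : ℚ) * ((Nat.totient k : ℚ))⁻¹) := by
    intro k hk
    have hk0 : 0 < k := Nat.pos_of_mem_divisors hk
    have hφ : (Nat.totient k : ℚ) ≠ 0 := by
      exact_mod_cast (Nat.totient_pos.mpr hk0).ne'
    have hd0 : (d : ℚ) ≠ 0 := by positivity
    split
    · ring
    · field_simp
  rw [Finset.sum_congr rfl hstep1, ← Finset.mul_sum]
  have hdpos : 0 < 1 - 1 / (d : ℚ) := by
    have h2 : (2 : ℚ) ≤ d := by exact_mod_cast hd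
    have hd0 : (0 : ℚ) < d := by linarith
    rw [sub_pos, div_lt_one hd0]; linarith
  apply mul_pos hdpos
  -- split off the multiples of S
  have hsplit : ∑ k ∈ R.divisors,
      (if S ∣ k then 0 else (moebius k : ℚ) * ((Nat.totient k : ℚ))⁻¹)
      = (∑ k ∈ R.divisors, (moebius k : ℚ) * ((Nat.totient k : ℚ))⁻¹)
        - ∑ k ∈ R.divisors,
            (if S ∣ k then (moebius k : ℚ) * ((Nat.totient k : ℚ))⁻¹ else 0) := by
    rw [← Finset.sum_sub_distrib]
    refine Finset.sum_congr rfl fun k _ => ?_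
    split <;> ring
  rw [hsplit]
  -- evaluate the multiples-of-S sum via k = S * m
  have hbij : ∑ k ∈ R.divisors,
      (if S ∣ k then (moebius k : ℚ) * ((Nat.totient k : ℚ))⁻¹ else 0)
      = ∑ m ∈ T.divisors, (moebius (S * m) : ℚ) * ((Nat.totient (S * m) : ℚ))⁻¹ := by
    rw [← Finset.sum_filter]
    refine Finset.sum_nbij' (fun k => k / S) (fun m => S * m) ?_ ?_ ?_ ?_ ?_
    · intro k hk
      simp only [Finset.mem_filter, Nat.mem_divisors] at hk
      obtain ⟨⟨hkR, _⟩, hSk⟩ := hk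
      obtain ⟨m, rfl⟩ := hSk
      show S * m / S ∈ T.divisors
      rw [Nat.mul_div_cancel_left m (by omega : 0 < S), Nat.mem_divisors]
      rw [← hRT] at hkR
      exact ⟨(Nat.mul_dvd_mul_iff_left (by omega : 0 < S)).mp hkR, hT0⟩
    · intro m hm
      rw [Nat.mem_divisors] at hm
      simp only [Finset.mem_filter, Nat.mem_divisors]
      exact ⟨⟨by rw [← hRT]; exact mul_dvd_mul_left S hm.1, hRsq.ne_zero⟩, dvd_mul_right S m⟩
    · intro k hk
      simp only [Finset.mem_filter] at hk
      exact Nat.mul_div_cancel' hk.2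
    · intro m _
      exact Nat.mul_div_cancel_left m (by omega : 0 < S)
    · intro k hk
      simp only [Finset.mem_filter] at hk
      rw [Nat.mul_div_cancel' hk.2]
  rw [hbij]
  -- factor the inner sum
  have hterm : ∀ m ∈ T.divisors,
      (moebius (S * m) : ℚ) * ((Nat.totient (S * m) : ℚ))⁻¹
      = ((moebius S : ℚ) * ((Nat.totient S : ℚ))⁻¹) *
          ((moebius m : ℚ) * ((Nat.totient m : ℚ))⁻¹) := by
    intro m hm
    have hcm : Nat.Coprime S m := Nat.Coprime.coprime_dvd_right (Nat.mem_divisors.mp hm).1 hcop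
    rw [isMultiplicative_moebius.map_mul_of_coprime hcm, Nat.totient_mul hcm]
    push_cast
    rw [mul_inv]
    ring
  rw [Finset.sum_congr rfl hterm, ← Finset.mul_sum]
  rw [aux_sum hRsq, aux_sum hTsq, hfac, Finset.prod_union hdisj]
  set PT := ∏ p ∈ T.primeFactors, (1 - ((Nat.totient p : ℚ))⁻¹) with hPT
  set PS := ∏ p ∈ S.primeFactors, (1 - ((Nat.totient p : ℚ))⁻¹) with hPS
  have hPTpos : 0 < PT := by
    rw [hPT]
    apply Finset.prod_pos
    intro p hp
    have h3 := hoddT p hp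
    have hφp := Nat.totient_prime (Nat.prime_of_mem_primeFactors hp)
    have hφ2 : (2 : ℚ) ≤ (Nat.totient p : ℚ) := by
      rw [hφp]; exact_mod_cast (by omega : 2 ≤ p - 1)
    have : ((Nat.totient p : ℚ))⁻¹ ≤ 1/2 := by
      rw [inv_le_comm₀ (by linarith) (by norm_num)]
      linarith
    linarith
  have key : PS * PT - (moebius S : ℚ) * ((Nat.totient S : ℚ))⁻¹ * PT
      = PT * (PS - (moebius S : ℚ) * ((Nat.totient S : ℚ))⁻¹) := by ring
  rw [key]
  apply mul_pos hPTpos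
  -- analyze the S part
  have hprimeS : ∀ p ∈ S.primeFactors, p.Prime := fun p hp => Nat.prime_of_mem_primeFactors hp
  have hprodS : (∏ p ∈ S.primeFactors, p) = S := Nat.prod_primeFactors_of_squarefree hSsq
  have hφSinv : ((Nat.totient S : ℚ))⁻¹
      = ∏ p ∈ S.primeFactors, ((Nat.totient p : ℚ))⁻¹ := by
    have h := totientInv_isMultiplicative.map_prod_of_prime S.primeFactors hprimeS
    rw [hprodS] at h
    simpa [totientInv_apply] using h
  have hμS : (moebius S : ℚ) = (-1 : ℚ) ^ S.primeFactors.card := by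
    have h := isMultiplicative_moebius.map_prod_of_prime S.primeFactors hprimeS
    rw [hprodS] at h
    have h2 : (∏ p ∈ S.primeFactors, moebius p) = (-1 : ℤ) ^ S.primeFactors.card := by
      rw [Finset.prod_congr rfl fun p hp => moebius_apply_prime (hprimeS p hp),
        Finset.prod_const]
    rw [h, h2]
    push_cast
    ring
  -- factor PS
  have hfactor : ∀ p ∈ S.primeFactors,
      (1 - ((Nat.totient p : ℚ))⁻¹) = ((p : ℚ) - 2) * ((Nat.totient p : ℚ))⁻¹ := by
    intro p hp
    have h3 := hoddS p hp
    have hφp := Nat.totient_prime (hprimeS p hp)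
    have hφq : (Nat.totient p : ℚ) = (p : ℚ) - 1 := by
      rw [hφp]; push_cast [Nat.cast_sub (by omega : 1 ≤ p)]; ring
    have hp3 : (3 : ℚ) ≤ (p : ℚ) := by exact_mod_cast h3
    have hne' : (p : ℚ) - 1 ≠ 0 := by intro h; linarith
    rw [hφq]
    field_simp
    ring
  have hPSeq : PS = (∏ p ∈ S.primeFactors, ((p : ℚ) - 2)) * ((Nat.totient S : ℚ))⁻¹ := by
    rw [hPS, Finset.prod_congr rfl hfactor, Finset.prod_mul_distrib, hφSinv]
  set Q := ∏ p ∈ S.primeFactors, ((p : ℚ) - 2) with hQ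
  have hgoal : PS - (moebius S : ℚ) * ((Nat.totient S : ℚ))⁻¹
      = (Q - (moebius S : ℚ)) * ((Nat.totient S : ℚ))⁻¹ := by
    rw [hPSeq]; ring
  rw [hgoal]
  have hφSpos : (0 : ℚ) < ((Nat.totient S : ℚ))⁻¹ := by
    have := Nat.totient_pos.mpr (by omega : 0 < S)
    positivity
  refine mul_pos ?_ hφSpos
  -- Q - μ S > 0
  have hQ1 : 1 ≤ Q := one_le_prod_rat fun p hp => by
    have := hoddS p hp
    have : (3 : ℚ) ≤ (p : ℚ) := by exact_mod_cast this
    linarith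
  rw [hμS]
  rcases Nat.even_or_odd S.primeFactors.card with he | ho
  · -- even number of prime factors: μ S = 1, need Q > 1
    rw [he.neg_one_pow]
    have hcard : 2 ≤ S.primeFactors.card := by
      have h0 : S.primeFactors.card ≠ 0 := by
        intro h0
        have : S = 1 := by rw [← hprodS, Finset.card_eq_zero.mp h0, Finset.prod_empty]
        omega
      have h1 : S.primeFactors.card ≠ 1 := by
        intro h1
        rw [h1] at he
        norm_num at he
      omega
    obtain ⟨p, hpmem, q, hqmem, hpq⟩ := Finset.one_lt_card.mp hcard
    have hqmem' : q ∈ S.primeFactors.erase p := Finset.mem_erase.mpr ⟨fun h => hpq h.symm, hqmem⟩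
    have hQsplit : Q = ((p : ℚ) - 2) * (((q : ℚ) - 2) *
        ∏ r ∈ (S.primeFactors.erase p).erase q, ((r : ℚ) - 2)) := by
      rw [hQ, ← Finset.mul_prod_erase _ _ hpmem, ← Finset.mul_prod_erase _ _ hqmem']
    have hrest : 1 ≤ ∏ r ∈ (S.primeFactors.erase p).erase q, ((r : ℚ) - 2) := by
      apply one_le_prod_rat
      intro r hr
      have hr' : r ∈ S.primeFactors := Finset.mem_of_mem_erase (Finset.mem_of_mem_erase hr)
      have := hoddS r hr'
      have : (3 : ℚ) ≤ (r : ℚ) := by exact_mod_cast this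
      linarith
    have hp3 := hoddS p hpmem
    have hq3 := hoddS q hqmem
    have h5 := prime_five_le (hprimeS p hpmem) (hprimeS q hqmem) hp3 hq3 (fun h => hpq (h ▸ rfl))
    have hpQ : (3 : ℚ) ≤ (p : ℚ) := by exact_mod_cast hp3
    have hqQ : (3 : ℚ) ≤ (q : ℚ) := by exact_mod_cast hq3
    have h2le : (3 : ℚ) ≤ ((p : ℚ) - 2) * ((q : ℚ) - 2) := by
      rcases h5 with h5 | h5
      · have : (5 : ℚ) ≤ (p : ℚ) := by exact_mod_cast h5
        nlinarith
      · have : (5 : ℚ) ≤ (q : ℚ) := by exact_mod_cast h5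
        nlinarith
    set Prest := ∏ r ∈ (S.primeFactors.erase p).erase q, ((r : ℚ) - 2) with hPrest
    have : (3 : ℚ) ≤ Q := by
      rw [hQsplit]
      calc (3:ℚ) ≤ ((p : ℚ) - 2) * ((q : ℚ) - 2) := h2le
      _ = (((p : ℚ) - 2) * ((q : ℚ) - 2)) * 1 := by ring
      _ ≤ (((p : ℚ) - 2) * ((q : ℚ) - 2)) * Prest := by
            apply mul_le_mul_of_nonneg_left hrest
            nlinarith
      _ = ((p : ℚ) - 2) * (((q : ℚ) - 2) * Prest) := by ring
    linarith
  · -- odd number of prime factors: μ S = -1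
    rw [ho.neg_one_pow]
    linarith
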